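/- For every nonnegative integer n, the first-order differential operator X_0 = Σ_{i=1}^N (z_i − z_{i+1})^{-1} (∂_i − ∂_{i+1}) leaves invariant the space 𝒳_0^n = ℂ[σ_1, σ_2, σ_3] ∩ P^n; that is, if f is a complex polynomial in z_1,…,z_N of total degree at most n that can be written as a polynomial in the power sums σ_1, σ_2, σ_3, then X_0 f (computed in the field of rational functions ℂ(z_1,…,z_N)) is again a polynomial in σ_1, σ_2, σ_3 of total degree at most n. -/
import Mathlib

set_option maxHeartbeats 1000000
set_option synthInstance.maxHeartbeats 400000



noncomputable section

open MvPolynomial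

/-- Polynomials in `N` variables over `ℂ`. -/
abbrev MvP (N : ℕ) : Type := MvPolynomial (Fin N) ℂ

/-- The canonical embedding of polynomials into the field of rational functions. -/
noncomputable def phi (N : ℕ) : MvP N →+* FractionRing (MvP N) :=
  algebraMap (MvP N) (FractionRing (MvP N))

/-- The power sum `σ_k = ∑ i, z_i ^ k`. -/
def sig (N k : ℕ) : MvP N := ∑ i : Fin N, X i ^ k

/-- The operator `X_0 = ∑ i (z_i - z_{i+1})⁻¹ (∂_i - ∂_{i+1})` (indices cyclic),
computed in the field of rational functions. -/
noncomputable def X0op (N : ℕ) [NeZero N] (f : MvP N) : FractionRing (MvP N) :=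
  ∑ i : Fin N, (phi N (X i - X (i + 1)))⁻¹ * phi N (pderiv i f - pderiv (i + 1) f)


set_option linter.unusedSectionVars false

variable {N : ℕ} [NeZero N]

lemma phi_add (a b : MvP N) : phi N (a + b) = phi N a + phi N b := (phi N).map_add a b
lemma phi_sub (a b : MvP N) : phi N (a - b) = phi N a - phi N b := (phi N).map_sub a b
lemma phi_mul (a b : MvP N) : phi N (a * b) = phi N a * phi N b := (phi N).map_mul a b
lemma phi_zero : phi N 0 = 0 := (phi N).map_zero
lemma phi_one : phi N 1 = 1 := (phi N).map_one
lemma phi_pow (a : MvP N) (k : ℕ) : phi N (a ^ k) = phi N a ^ k := (phi N).map_pow a k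

omit [NeZero N] in
lemma phi_inj : Function.Injective (phi N) := IsFractionRing.injective _ _

lemma X0op_add (f g : MvP N) : X0op N (f + g) = X0op N f + X0op N g := by
  simp only [X0op, map_add]
  rw [← Finset.sum_add_distrib]
  congr 1; funext i
  rw [show ∀ a b c d : MvP N, a + b - (c + d) = (a - c) + (b - d) by intros; ring,
    phi_add]
  ring

lemma X0op_C (c : ℂ) : X0op N (C c) = 0 := by
  simp [X0op, pderiv_C]

lemma X0op_zero : X0op N 0 = 0 := by
  simpa using X0op_C (N := N) 0

lemma X0op_one : X0op N 1 = 0 := by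
  simpa using X0op_C (N := N) 1

lemma X0op_mul (f g : MvP N) :
    X0op N (f * g) = phi N f * X0op N g + phi N g * X0op N f := by
  simp only [X0op, Finset.mul_sum, pderiv_mul]
  rw [← Finset.sum_add_distrib]
  congr 1; funext i
  have : pderiv i f * g + f * pderiv i g - (pderiv (i+1) f * g + f * pderiv (i+1) g)
      = f * (pderiv i g - pderiv (i+1) g) + g * (pderiv i f - pderiv (i+1) f) := by ring
  rw [this, phi_add, phi_mul, phi_mul]
  ring

lemma X0op_pow (p : MvP N) (k : ℕ) :
    X0op N (p ^ k) = phi N ((k : MvP N) * p ^ (k - 1)) * X0op N p := by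
  induction k with
  | zero => simp [X0op_one]
  | succ m ih =>
    rw [pow_succ, X0op_mul, ih]
    have h : (p ^ m + p * ((m : MvP N) * p ^ (m - 1)))
        = ((m + 1 : ℕ) : MvP N) * p ^ (m + 1 - 1) := by
      cases m with
      | zero => simp
      | succ l =>
        have h2 : p * p ^ (l + 1 - 1) = p ^ (l + 1) := by
          rw [Nat.add_sub_cancel, ← pow_succ']
        rw [Nat.add_sub_cancel] at h2 ⊢
        push_cast
        calc p ^ (l+1) + p * (((l:MvP N) + 1) * p ^ l)
            = p ^ (l+1) + ((l:MvP N)+1) * (p * p ^ l) := by ring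
          _ = ((l:MvP N) + 1 + 1) * p ^ (l+1) := by rw [h2]; ring
    rw [← h]
    simp only [phi_add, phi_mul]
    ring

lemma fin_ne_add_one (hN : 2 ≤ N) (i : Fin N) : i ≠ i + 1 := by
  intro h
  have h0 : (1 : Fin N) = 0 := left_eq_add.mp h
  have h1 : ((1 : Fin N) : ℕ) = 1 % N := Fin.val_one' N
  rw [h0, Nat.mod_eq_of_lt (by omega)] at h1
  simp at h1

lemma phi_X_sub_ne (hN : 2 ≤ N) (i : Fin N) : phi N (X i - X (i + 1)) ≠ 0 := by
  intro h0
  have h1 : X i - X (i + 1) = (0 : MvP N) := phi_inj (by rw [h0, phi_zero])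
  exact fin_ne_add_one hN i (X_injective (sub_eq_zero.mp h1))

lemma pderiv_sig (i : Fin N) (k : ℕ) :
    pderiv i (sig N k) = (k : MvP N) * X i ^ (k - 1) := by
  classical
  rw [sig, map_sum]
  rw [Finset.sum_eq_single i]
  · rw [pderiv_pow, pderiv_X_self, mul_one]
  · intro j _ hj
    rw [pderiv_pow, pderiv_X, Pi.single_eq_of_ne hj, mul_zero]
  · simp

lemma X0op_sig1 : X0op N (sig N 1) = 0 := by
  rw [X0op]
  apply Finset.sum_eq_zero
  intro i _
  simp [pderiv_sig]

lemma X0op_sig2 (hN : 2 ≤ N) : X0op N (sig N 2) = phi N ((2 * N : ℕ) : MvP N) := by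
  rw [X0op]
  have : ∀ i : Fin N, (phi N (X i - X (i + 1)))⁻¹ *
      phi N (pderiv i (sig N 2) - pderiv (i + 1) (sig N 2)) = phi N 2 := by
    intro i
    rw [pderiv_sig, pderiv_sig]
    have h2 : ((2:ℕ) : MvP N) * X i ^ (2 - 1) - ((2:ℕ):MvP N) * X (i + 1) ^ (2 - 1)
        = (X i - X (i + 1)) * 2 := by push_cast; ring
    rw [h2, phi_mul, ← mul_assoc, inv_mul_cancel₀ (phi_X_sub_ne hN i), one_mul]
  rw [Finset.sum_congr rfl (fun i _ => this i), Finset.sum_const, Finset.card_univ,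
    Fintype.card_fin, nsmul_eq_mul,
    show ((2 * N : ℕ) : MvP N) = (N : MvP N) * 2 by push_cast; ring,
    phi_mul, map_natCast (phi N)]

lemma X0op_sig3 (hN : 2 ≤ N) : X0op N (sig N 3) = phi N (6 * sig N 1) := by
  rw [X0op]
  have key : ∀ i : Fin N, (phi N (X i - X (i + 1)))⁻¹ *
      phi N (pderiv i (sig N 3) - pderiv (i + 1) (sig N 3))
      = phi N (3 * (X i + X (i + 1))) := by
    intro i
    rw [pderiv_sig, pderiv_sig]
    have h2 : ((3:ℕ) : MvP N) * X i ^ (3 - 1) - ((3:ℕ):MvP N) * X (i + 1) ^ (3 - 1)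
        = (X i - X (i + 1)) * (3 * (X i + X (i + 1))) := by push_cast; ring
    rw [h2, phi_mul, ← mul_assoc, inv_mul_cancel₀ (phi_X_sub_ne hN i), one_mul]
  rw [Finset.sum_congr rfl (fun i _ => key i), ← map_sum]
  congr 1
  have hshift : ∑ i : Fin N, X (i + 1) = sig N 1 := by
    rw [sig]
    simp only [pow_one]
    exact Fintype.sum_equiv (Equiv.addRight 1) _ _ (fun i => rfl)
  have hs1 : (∑ i : Fin N, X i) = sig N 1 := by simp [sig]
  simp only [mul_add, Finset.sum_add_distrib, ← Finset.mul_sum, hshift, hs1]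
  ring

-- degrees of sig
lemma deg_sig (k : ℕ) : (sig N k).totalDegree ≤ k := by
  rw [sig]
  refine (totalDegree_finset_sum _ _).trans (Finset.sup_le fun i _ => ?_)
  refine (totalDegree_pow _ _).trans ?_
  rw [totalDegree_X]
  omega

lemma deg_mul_le {p q : MvP N} {dp dq : ℕ} (hp : p.totalDegree ≤ dp)
    (hq : q.totalDegree ≤ dq) : (p * q).totalDegree ≤ dp + dq :=
  (totalDegree_mul p q).trans (add_le_add hp hq)

lemma deg_sig_pow (k m : ℕ) : (sig N k ^ m).totalDegree ≤ k * m := by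
  refine (totalDegree_pow _ _).trans ?_
  calc m * (sig N k).totalDegree ≤ m * k := Nat.mul_le_mul_left m (deg_sig k)
    _ = k * m := Nat.mul_comm m k

omit [NeZero N] in
lemma sig_isHomogeneous (k : ℕ) : (sig N k).IsHomogeneous k := by
  rw [sig]
  exact MvPolynomial.IsHomogeneous.sum _ _ _ (fun i _ => isHomogeneous_X_pow i k)

omit [NeZero N] in
lemma mono_isHomogeneous (a b c : ℕ) :
    (sig N 1 ^ a * sig N 2 ^ b * sig N 3 ^ c).IsHomogeneous (a + 2*b + 3*c) := by
  have h := (((sig_isHomogeneous (N := N) 1).pow a).mul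
    ((sig_isHomogeneous (N := N) 2).pow b)).mul ((sig_isHomogeneous (N := N) 3).pow c)
  have : 1 * a + 2 * b + 3 * c = a + 2*b + 3*c := by ring
  rwa [this] at h

omit [NeZero N] in
lemma deg_natCast (m : ℕ) : ((m : MvP N)).totalDegree = 0 := by
  rw [← map_natCast (C : ℂ →+* MvP N) m, totalDegree_C]

omit [NeZero N] in
omit [NeZero N] in
lemma deg_natCast_le (m : ℕ) : ((m : MvP N)).totalDegree ≤ 0 := (deg_natCast m).le

lemma six_eq : (6 : MvP N) = ((6 : ℕ) : MvP N) := by norm_cast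

lemma sig_mem_adjoin (k : ℕ) (hk : k = 1 ∨ k = 2 ∨ k = 3) :
    sig N k ∈ Algebra.adjoin ℂ ({sig N 1, sig N 2, sig N 3} : Set (MvP N)) := by
  apply Algebra.subset_adjoin
  rcases hk with rfl | rfl | rfl
  · exact Set.mem_insert _ _
  · exact Set.mem_insert_of_mem _ (Set.mem_insert _ _)
  · exact Set.mem_insert_of_mem _ (Set.mem_insert_of_mem _ rfl)

lemma key_gen (hN : 2 ≤ N) (a b c : ℕ) :
    ∃ g : MvP N, g ∈ Algebra.adjoin ℂ ({sig N 1, sig N 2, sig N 3} : Set (MvP N)) ∧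
      g.totalDegree ≤ a + 2*b + 3*c ∧
      phi N g = X0op N (sig N 1 ^ a * sig N 2 ^ b * sig N 3 ^ c) := by
  set A := Algebra.adjoin ℂ ({sig N 1, sig N 2, sig N 3} : Set (MvP N)) with hA
  refine ⟨sig N 1 ^ a * sig N 2 ^ b * ((c : MvP N) * sig N 3 ^ (c-1)) * (6 * sig N 1)
      + sig N 3 ^ c * (sig N 1 ^ a * ((b : MvP N) * sig N 2 ^ (b-1)) * ((2*N : ℕ) : MvP N)),
    ?_, ?_, ?_⟩
  · have h1 : sig N 1 ∈ A := sig_mem_adjoin 1 (Or.inl rfl)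
    have h2 : sig N 2 ∈ A := sig_mem_adjoin 2 (Or.inr (Or.inl rfl))
    have h3 : sig N 3 ∈ A := sig_mem_adjoin 3 (Or.inr (Or.inr rfl))
    exact A.add_mem
      (A.mul_mem (A.mul_mem (A.mul_mem (A.pow_mem h1 a) (A.pow_mem h2 b))
        (A.mul_mem (A.natCast_mem c) (A.pow_mem h3 (c-1))))
        (A.mul_mem (by rw [six_eq]; exact A.natCast_mem 6) h1))
      (A.mul_mem (A.pow_mem h3 c)
        (A.mul_mem (A.mul_mem (A.pow_mem h1 a)
          (A.mul_mem (A.natCast_mem b) (A.pow_mem h2 (b-1)))) (A.natCast_mem (2*N))))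
  · refine (totalDegree_add _ _).trans ?_
    rw [max_le_iff]
    constructor
    · cases c with
      | zero =>
        simp only [Nat.cast_zero, zero_mul, mul_zero]
        simp
      | succ k =>
        have h1 : (((k+1:ℕ) : MvP N) * sig N 3 ^ (k+1-1)).totalDegree ≤ 0 + 3*(k+1-1) :=
          deg_mul_le (by exact_mod_cast deg_natCast_le (k+1)) (deg_sig_pow 3 _)
        have h2 : ((6 : MvP N) * sig N 1).totalDegree ≤ 0 + 1 :=
          deg_mul_le (by rw [six_eq]; exact deg_natCast_le 6) (deg_sig 1)
        have h3 := deg_mul_le (deg_mul_le (deg_mul_le (deg_sig_pow 1 a) (deg_sig_pow 2 b)) h1) h2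
        exact h3.trans (by omega)
    · cases b with
      | zero =>
        simp only [Nat.cast_zero, zero_mul, mul_zero]
        simp
      | succ k =>
        have h1 : (((k+1:ℕ) : MvP N) * sig N 2 ^ (k+1-1)).totalDegree ≤ 0 + 2*(k+1-1) :=
          deg_mul_le (by exact_mod_cast deg_natCast_le (k+1)) (deg_sig_pow 2 _)
        have h3 := deg_mul_le (deg_sig_pow 3 c)
          (deg_mul_le (deg_mul_le (deg_sig_pow 1 a) h1)
            (deg_natCast_le (2*N)))
        exact h3.trans (by omega)
  · rw [X0op_mul, X0op_mul, X0op_pow (sig N 3), X0op_pow (sig N 2), X0op_pow (sig N 1),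
      X0op_sig1, X0op_sig2 hN, X0op_sig3 hN]
    simp only [phi_add, phi_mul]
    push_cast
    ring

/-- The multiplicative monoid of monomials in the `sig`s. -/
def Msub (N : ℕ) : Submonoid (MvP N) where
  carrier := {p | ∃ a b c : ℕ, p = sig N 1 ^ a * sig N 2 ^ b * sig N 3 ^ c}
  one_mem' := ⟨0, 0, 0, by simp⟩
  mul_mem' := by
    rintro x y ⟨a, b, c, rfl⟩ ⟨a', b', c', rfl⟩
    exact ⟨a + a', b + b', c + c', by rw [pow_add, pow_add, pow_add]; ring⟩

/-- Monomials in the `sig`s of weight at most `n`. -/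
def Mn (N n : ℕ) : Set (MvP N) :=
  {p | ∃ a b c : ℕ, a + 2*b + 3*c ≤ n ∧ p = sig N 1 ^ a * sig N 2 ^ b * sig N 3 ^ c}

omit [NeZero N] in
lemma mem_span_Msub {f : MvP N}
    (hmem : f ∈ Algebra.adjoin ℂ ({sig N 1, sig N 2, sig N 3} : Set (MvP N))) :
    f ∈ Submodule.span ℂ ((Msub N : Set (MvP N))) := by
  have h1 : f ∈ Submodule.span ℂ
      ((Submonoid.closure ({sig N 1, sig N 2, sig N 3} : Set (MvP N)) : Set (MvP N))) := by
    rw [← Algebra.adjoin_eq_span]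
    exact hmem
  refine Submodule.span_mono ?_ h1
  have : Submonoid.closure ({sig N 1, sig N 2, sig N 3} : Set (MvP N)) ≤ Msub N := by
    rw [Submonoid.closure_le]
    rintro p (rfl | rfl | rfl)
    · exact ⟨1, 0, 0, by simp⟩
    · exact ⟨0, 1, 0, by simp⟩
    · exact ⟨0, 0, 1, by simp⟩
  exact this

omit [NeZero N] in
lemma comp_mem_span {f : MvP N} (hf : f ∈ Submodule.span ℂ ((Msub N : Set (MvP N)))) (d : ℕ) :
    homogeneousComponent d f ∈ Submodule.span ℂ (Mn N d) := by
  induction hf using Submodule.span_induction with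
  | mem x hx =>
    obtain ⟨a, b, c, rfl⟩ := hx
    rw [homogeneousComponent_of_mem
      ((mem_homogeneousSubmodule _ _).mpr (mono_isHomogeneous a b c))]
    split_ifs with h
    · exact Submodule.subset_span ⟨a, b, c, h.ge, rfl⟩
    · exact Submodule.zero_mem _
  | zero => rw [map_zero]; exact Submodule.zero_mem _
  | add x y _ _ hx hy => rw [map_add]; exact Submodule.add_mem _ hx hy
  | smul r x _ hx => rw [map_smul]; exact Submodule.smul_mem _ r hx

omit [NeZero N] in
lemma mem_span_Mn {f : MvP N} {n : ℕ}
    (hmem : f ∈ Algebra.adjoin ℂ ({sig N 1, sig N 2, sig N 3} : Set (MvP N)))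
    (hdeg : f.totalDegree ≤ n) :
    f ∈ Submodule.span ℂ (Mn N n) := by
  have h := mem_span_Msub hmem
  rw [← sum_homogeneousComponent f]
  refine Submodule.sum_mem _ fun d hd => ?_
  have hdn : d ≤ n := by
    have := Finset.mem_range.mp hd
    omega
  refine Submodule.span_mono ?_ (comp_mem_span h d)
  rintro p ⟨a, b, c, hw, rfl⟩
  exact ⟨a, b, c, hw.trans hdn, rfl⟩

theorem stmt_0 (N : ℕ) [NeZero N] (hN : 3 ≤ N) (n : ℕ) (f : MvP N)
    (hmem : f ∈ Algebra.adjoin ℂ ({sig N 1, sig N 2, sig N 3} : Set (MvP N)))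
    (hdeg : f.totalDegree ≤ n) :
    ∃ g : MvP N,
      g ∈ Algebra.adjoin ℂ ({sig N 1, sig N 2, sig N 3} : Set (MvP N)) ∧
      g.totalDegree ≤ n ∧ phi N g = X0op N f := by
  have hN2 : 2 ≤ N := by omega
  have hf : f ∈ Submodule.span ℂ (Mn N n) := mem_span_Mn hmem hdeg
  clear hmem hdeg
  induction hf using Submodule.span_induction with
  | mem x hx =>
    obtain ⟨a, b, c, hw, rfl⟩ := hx
    obtain ⟨g, hg1, hg2, hg3⟩ := key_gen hN2 a b c
    exact ⟨g, hg1, hg2.trans hw, hg3⟩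
  | zero => exact ⟨0, Subalgebra.zero_mem _, by simp, by rw [phi_zero, X0op_zero]⟩
  | add x y _ _ hx hy =>
    obtain ⟨g1, hg11, hg12, hg13⟩ := hx
    obtain ⟨g2, hg21, hg22, hg23⟩ := hy
    refine ⟨g1 + g2, Subalgebra.add_mem _ hg11 hg21, ?_, ?_⟩
    · exact (totalDegree_add g1 g2).trans (max_le hg12 hg22)
    · rw [phi_add, hg13, hg23, X0op_add]
  | smul r x _ hx =>
    obtain ⟨g, hg1, hg2, hg3⟩ := hx
    refine ⟨C r * g, Subalgebra.mul_mem _ (Subalgebra.algebraMap_mem _ r) hg1, ?_, ?_⟩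
    · refine (totalDegree_mul _ _).trans ?_
      rw [totalDegree_C]
      omega
    · rw [smul_eq_C_mul, X0op_mul, X0op_C, mul_zero, add_zero, phi_mul, hg3]
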